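/- Fix λ > 0, a finite set Y, a full-support distribution q on Y, and u : Y → ℝ. Assume that u is not of the form u(y) = b₁ + b₂·log q(y) for any constants b₁, b₂ ∈ ℝ. For μ < 1/λ, let p̂_μ denote the Gibbs minimizer p̂_μ(y) ∝ exp(−u(y)/κ)·q(y)^β with κ = 1/λ − μ and β = 1/(1−λμ). Then the map μ ↦ H(p̂_μ) (Shannon entropy of the worst-case distortion) is strictly decreasing on (−∞, 1/λ). -/

import Mathlib

open Finset Real

/-- Shannon entropy (natural log). -/
noncomputable def shannonEntropy {Y : Type*} [Fintype Y] (p : Y → ℝ) : ℝ :=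
  -∑ y, p y * Real.log (p y)

section aux
variable {Y : Type*} [Fintype Y] [Nonempty Y] (φ : Y → ℝ)

/-- partition function positivity -/
lemma Zpos (t : ℝ) : 0 < ∑ z, Real.exp (t * φ z) :=
  Finset.sum_pos (fun z _ => Real.exp_pos _) Finset.univ_nonempty

/-- entropy formula -/
lemma entropy_gibbs (t : ℝ) :
    shannonEntropy (fun y => Real.exp (t * φ y) / ∑ z, Real.exp (t * φ z)) =
      Real.log (∑ z, Real.exp (t * φ z)) -
        t * ∑ y, φ y * (Real.exp (t * φ y) / ∑ z, Real.exp (t * φ z)) := by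
  have hZ := Zpos φ t
  have hZ0 : (∑ z, Real.exp (t * φ z)) ≠ 0 := ne_of_gt hZ
  unfold shannonEntropy
  have hlog : ∀ y, Real.log (Real.exp (t * φ y) / ∑ z, Real.exp (t * φ z)) =
      t * φ y - Real.log (∑ z, Real.exp (t * φ z)) := by
    intro y
    rw [Real.log_div (Real.exp_ne_zero _) hZ0, Real.log_exp]
  have hsum1 : ∑ y, Real.exp (t * φ y) / ∑ z, Real.exp (t * φ z) = 1 := by
    rw [← Finset.sum_div, div_self hZ0]
  calc -∑ y, (Real.exp (t * φ y) / ∑ z, Real.exp (t * φ z)) *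
        Real.log (Real.exp (t * φ y) / ∑ z, Real.exp (t * φ z))
      = -∑ y, ((Real.exp (t * φ y) / ∑ z, Real.exp (t * φ z)) * (t * φ y) -
          (Real.exp (t * φ y) / ∑ z, Real.exp (t * φ z)) *
            Real.log (∑ z, Real.exp (t * φ z))) := by
        congr 1; refine Finset.sum_congr rfl fun y _ => ?_
        rw [hlog y]; ring
    _ = Real.log (∑ z, Real.exp (t * φ z)) -
        t * ∑ y, φ y * (Real.exp (t * φ y) / ∑ z, Real.exp (t * φ z)) := by
        rw [Finset.sum_sub_distrib, ← Finset.sum_mul, hsum1, neg_sub, one_mul,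
          Finset.mul_sum]
        congr 1
        refine Finset.sum_congr rfl fun y _ => ?_; ring

/-- mean monotone (cross-multiplied form) -/
lemma mean_mono {s t : ℝ} (hst : s ≤ t) :
    (∑ y, φ y * Real.exp (s * φ y)) * (∑ z, Real.exp (t * φ z)) ≤
    (∑ y, φ y * Real.exp (t * φ y)) * (∑ z, Real.exp (s * φ z)) := by
  have key : 0 ≤ ∑ y, ∑ z, (φ y - φ z) *
      (Real.exp (t * φ y) * Real.exp (s * φ z) -
       Real.exp (s * φ y) * Real.exp (t * φ z)) := by
    refine Finset.sum_nonneg fun y _ => Finset.sum_nonneg fun z _ => ?_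
    rcases le_total (φ z) (φ y) with h | h
    · refine mul_nonneg (by linarith) (sub_nonneg.2 ?_)
      rw [← Real.exp_add, ← Real.exp_add]
      exact Real.exp_le_exp.2 (by nlinarith)
    · have h2 : Real.exp (t * φ y) * Real.exp (s * φ z) ≤
          Real.exp (s * φ y) * Real.exp (t * φ z) := by
        rw [← Real.exp_add, ← Real.exp_add]
        exact Real.exp_le_exp.2 (by nlinarith)
      nlinarith [h2]
  have expand : ∑ y, ∑ z, (φ y - φ z) *
      (Real.exp (t * φ y) * Real.exp (s * φ z) -
       Real.exp (s * φ y) * Real.exp (t * φ z)) =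
      2 * ((∑ y, φ y * Real.exp (t * φ y)) * (∑ z, Real.exp (s * φ z)) -
           (∑ y, φ y * Real.exp (s * φ y)) * (∑ z, Real.exp (t * φ z))) := by
    have : ∀ y, ∑ z, (φ y - φ z) *
        (Real.exp (t * φ y) * Real.exp (s * φ z) -
         Real.exp (s * φ y) * Real.exp (t * φ z)) =
        φ y * Real.exp (t * φ y) * (∑ z, Real.exp (s * φ z))
        - φ y * Real.exp (s * φ y) * (∑ z, Real.exp (t * φ z))
        - Real.exp (t * φ y) * (∑ z, φ z * Real.exp (s * φ z))
        + Real.exp (s * φ y) * (∑ z, φ z * Real.exp (t * φ z)) := by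
      intro y
      rw [Finset.mul_sum, Finset.mul_sum, Finset.mul_sum, Finset.mul_sum,
        ← Finset.sum_sub_distrib, ← Finset.sum_sub_distrib, ← Finset.sum_add_distrib]
      refine Finset.sum_congr rfl fun z _ => ?_; ring
    rw [Finset.sum_congr rfl fun y _ => this y]
    rw [Finset.sum_add_distrib, Finset.sum_sub_distrib, Finset.sum_sub_distrib,
      ← Finset.sum_mul, ← Finset.sum_mul, ← Finset.sum_mul, ← Finset.sum_mul]
    ring
  rw [expand] at key
  linarith

end aux

section key
variable {Y : Type*} [Fintype Y] [Nonempty Y]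

lemma key_lemma (φ : Y → ℝ) (hφ : ∃ y z, φ y ≠ φ z) {s t : ℝ}
    (hs : 0 < s) (hst : s < t) :
    shannonEntropy (fun y => Real.exp (t * φ y) / ∑ z, Real.exp (t * φ z)) <
    shannonEntropy (fun y => Real.exp (s * φ y) / ∑ z, Real.exp (s * φ z)) := by
  set Zs := ∑ z, Real.exp (s * φ z) with hZs
  set Zt := ∑ z, Real.exp (t * φ z) with hZt
  have hZsp : 0 < Zs := Zpos φ s
  have hZtp : 0 < Zt := Zpos φ t
  set ps : Y → ℝ := fun y => Real.exp (s * φ y) / Zs with hps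
  set pt : Y → ℝ := fun y => Real.exp (t * φ y) / Zt with hpt
  have hpsp : ∀ y, 0 < ps y := fun y => div_pos (Real.exp_pos _) hZsp
  have hptp : ∀ y, 0 < pt y := fun y => div_pos (Real.exp_pos _) hZtp
  have hsum_s : ∑ y, ps y = 1 := by
    simp only [hps, ← Finset.sum_div]; exact div_self (ne_of_gt hZsp)
  have hsum_t : ∑ y, pt y = 1 := by
    simp only [hpt, ← Finset.sum_div]; exact div_self (ne_of_gt hZtp)
  -- the two distributions differ somewhere
  have hne : ∃ y, pt y ≠ ps y := by
    by_contra h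
    push_neg at h
    obtain ⟨y₀, z₀, hyz⟩ := hφ
    have e1 : Real.exp (t * φ y₀) * Zs = Real.exp (s * φ y₀) * Zt := by
      have h0 := h y₀
      simp only [hpt, hps] at h0
      exact (div_eq_div_iff (ne_of_gt hZtp) (ne_of_gt hZsp)).1 h0
    have e2 : Real.exp (t * φ z₀) * Zs = Real.exp (s * φ z₀) * Zt := by
      have h0 := h z₀
      simp only [hpt, hps] at h0
      exact (div_eq_div_iff (ne_of_gt hZtp) (ne_of_gt hZsp)).1 h0
    have hzz : Zs * Zt ≠ 0 := by positivity
    have e3 : Real.exp (t * φ y₀) * Real.exp (s * φ z₀) =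
        Real.exp (s * φ y₀) * Real.exp (t * φ z₀) := by
      refine mul_right_cancel₀ hzz ?_
      linear_combination (Real.exp (s * φ z₀) * Zt) * e1 -
        (Real.exp (s * φ y₀) * Zt) * e2
    rw [← Real.exp_add, ← Real.exp_add] at e3
    have := Real.exp_injective e3
    have : (t - s) * (φ y₀ - φ z₀) = 0 := by linarith
    rcases mul_eq_zero.1 this with h' | h'
    · linarith
    · exact hyz (by linarith)
  -- Gibbs inequality: ∑ pt * log ps < ∑ pt * log pt ... i.e. cross entropy strict
  have gibbs : ∑ y, pt y * Real.log (ps y) < ∑ y, pt y * Real.log (pt y) := by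
    have h1 : ∑ y, pt y * Real.log (ps y / pt y) < ∑ y, (ps y - pt y) := by
      refine Finset.sum_lt_sum (fun y _ => ?_) ?_
      · have hpos : 0 < ps y / pt y := div_pos (hpsp y) (hptp y)
        have hlog : Real.log (ps y / pt y) ≤ ps y / pt y - 1 :=
          Real.log_le_sub_one_of_pos hpos
        have := mul_le_mul_of_nonneg_left hlog (le_of_lt (hptp y))
        calc pt y * Real.log (ps y / pt y) ≤ pt y * (ps y / pt y - 1) := this
          _ = ps y - pt y := by
            rw [mul_sub, mul_div_assoc', mul_comm (pt y) (ps y), mul_div_assoc,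
              div_self (hptp y).ne', mul_one, mul_one]
      · obtain ⟨y, hy⟩ := hne
        refine ⟨y, Finset.mem_univ y, ?_⟩
        have hpos : 0 < ps y / pt y := div_pos (hpsp y) (hptp y)
        have hne1 : ps y / pt y ≠ 1 := by
          intro h
          apply hy
          rw [div_eq_one_iff_eq (hptp y).ne'] at h
          linarith
        have hlog : Real.log (ps y / pt y) < ps y / pt y - 1 :=
          Real.log_lt_sub_one_of_pos hpos hne1
        have := mul_lt_mul_of_pos_left hlog (hptp y)
        calc pt y * Real.log (ps y / pt y) < pt y * (ps y / pt y - 1) := this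
          _ = ps y - pt y := by
            rw [mul_sub, mul_div_assoc', mul_comm (pt y) (ps y), mul_div_assoc,
              div_self (hptp y).ne', mul_one, mul_one]
    have h2 : ∑ y, (ps y - pt y) = 0 := by
      rw [Finset.sum_sub_distrib, hsum_s, hsum_t]; ring
    have h3 : ∑ y, pt y * Real.log (ps y / pt y) =
        ∑ y, pt y * Real.log (ps y) - ∑ y, pt y * Real.log (pt y) := by
      rw [← Finset.sum_sub_distrib]
      refine Finset.sum_congr rfl fun y _ => ?_
      rw [Real.log_div (ne_of_gt (hpsp y)) (ne_of_gt (hptp y))]; ring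
    rw [h3, h2] at h1
    linarith
  -- cross entropy computation: ∑ pt * log ps = ∑ pt * (s*φ - log Zs)
  have cross : ∑ y, pt y * Real.log (ps y) =
      s * (∑ y, φ y * pt y) - Real.log Zs := by
    have : ∀ y, Real.log (ps y) = s * φ y - Real.log Zs := by
      intro y
      rw [hps]
      rw [Real.log_div (Real.exp_ne_zero _) (ne_of_gt hZsp), Real.log_exp]
    calc ∑ y, pt y * Real.log (ps y)
        = ∑ y, (s * (φ y * pt y) - pt y * Real.log Zs) := by
          refine Finset.sum_congr rfl fun y _ => ?_; rw [this y]; ring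
      _ = s * (∑ y, φ y * pt y) - Real.log Zs := by
          rw [Finset.sum_sub_distrib, ← Finset.mul_sum, ← Finset.sum_mul, hsum_t,
            one_mul]
  -- entropies
  have Ht : shannonEntropy pt = Real.log Zt - t * ∑ y, φ y * pt y :=
    entropy_gibbs φ t
  have Hs : shannonEntropy ps = Real.log Zs - s * ∑ y, φ y * ps y :=
    entropy_gibbs φ s
  -- shannonEntropy pt = -∑ pt log pt < -∑ pt log ps = log Zs - s * E_t ... combine
  have step1 : shannonEntropy pt < Real.log Zs - s * ∑ y, φ y * pt y := by
    have h0 : shannonEntropy pt = -∑ y, pt y * Real.log (pt y) := rfl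
    rw [cross] at gibbs
    rw [h0]
    linarith [gibbs]
  -- mean monotonicity: E_s ≤ E_t
  have emono : ∑ y, φ y * ps y ≤ ∑ y, φ y * pt y := by
    have h := mean_mono φ (le_of_lt hst)
    have hs' : ∑ y, φ y * ps y = (∑ y, φ y * Real.exp (s * φ y)) / Zs := by
      rw [Finset.sum_div]
      refine Finset.sum_congr rfl fun y _ => ?_
      rw [hps]; ring
    have ht' : ∑ y, φ y * pt y = (∑ y, φ y * Real.exp (t * φ y)) / Zt := by
      rw [Finset.sum_div]
      refine Finset.sum_congr rfl fun y _ => ?_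
      rw [hpt]; ring
    rw [hs', ht', div_le_div_iff₀ hZsp hZtp]
    linarith [h]
  calc shannonEntropy pt < Real.log Zs - s * ∑ y, φ y * pt y := step1
    _ ≤ Real.log Zs - s * ∑ y, φ y * ps y := by nlinarith [emono, hs]
    _ = shannonEntropy ps := Hs.symm

end key

/-- The Shannon entropy of the worst-case (Gibbs) distortion is strictly
decreasing in the complexity-aversion parameter `μ` on `(−∞, 1/λ)`, provided
the payoff is not an affine function of `log q`. -/
theorem stmt4 {Y : Type*} [Fintype Y] [Nonempty Y]
    (q : Y → ℝ) (hq : ∀ y, 0 < q y) (hq1 : ∑ y, q y = 1)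
    (u : Y → ℝ) (lam : ℝ) (hlam : 0 < lam)
    (hu : ¬ ∃ b₁ b₂ : ℝ, ∀ y, u y = b₁ + b₂ * Real.log (q y))
    (phat : ℝ → Y → ℝ)
    (hphat : ∀ mu y, phat mu y =
      Real.exp (-(u y) / (1 / lam - mu)) * q y ^ (1 / (1 - lam * mu)) /
        ∑ z, Real.exp (-(u z) / (1 / lam - mu)) * q z ^ (1 / (1 - lam * mu))) :
    StrictAntiOn (fun mu => shannonEntropy (phat mu)) (Set.Iio (1 / lam)) := by
  intro μ₁ h1 μ₂ h2 h12
  simp only [Set.mem_Iio] at h1 h2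
  have hlam' : lam ≠ 0 := ne_of_gt hlam
  set φ : Y → ℝ := fun y => Real.log (q y) - lam * u y with hφdef
  have hφ : ∃ y z, φ y ≠ φ z := by
    by_contra h
    push_neg at h
    apply hu
    have y₀ : Y := Classical.arbitrary Y
    refine ⟨-(φ y₀)/lam, 1/lam, fun y => ?_⟩
    have hc := h y y₀
    simp only [hφdef] at hc
    simp only [hφdef]
    field_simp
    linarith [hc]
  have hden : ∀ μ, μ < 1/lam → 0 < 1 - lam * μ := by
    intro μ hμ
    have := (lt_div_iff₀ hlam).1 hμ
    nlinarith
  have hrepr : ∀ μ, μ < 1/lam → phat μ = fun y =>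
      Real.exp ((1/(1-lam*μ)) * φ y) / ∑ z, Real.exp ((1/(1-lam*μ)) * φ z) := by
    intro μ hμ
    have hd := hden μ hμ
    have hd' : (1 : ℝ) - lam * μ ≠ 0 := ne_of_gt hd
    funext y
    rw [hphat]
    have hterm : ∀ z, Real.exp (-(u z)/(1/lam - μ)) * q z ^ (1/(1-lam*μ)) =
        Real.exp ((1/(1-lam*μ)) * φ z) := by
      intro z
      rw [Real.rpow_def_of_pos (hq z), ← Real.exp_add]
      congr 1
      have hk : 1/lam - μ = (1 - lam*μ)/lam := by field_simp
      rw [hk, hφdef]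
      field_simp
      ring
    simp only [hterm]
  have e1 := hrepr μ₁ h1
  have e2 := hrepr μ₂ h2
  simp only [e1, e2]
  have hd1 := hden μ₁ h1
  have hd2 := hden μ₂ h2
  have hs : 0 < 1/(1 - lam*μ₁) := by positivity
  have hst : 1/(1 - lam*μ₁) < 1/(1 - lam*μ₂) := by
    apply one_div_lt_one_div_of_lt hd2
    nlinarith
  exact key_lemma φ hφ hs hst
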